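/- Let X ∈ ℝ^{d×n}, and for i = 1,…,L let σᵢ : ℝ^{dᵢ×n} → ℝ^{dᵢ×n} be ρᵢ-Lipschitz with respect to the Frobenius norm with σᵢ(0)=0, and let aᵢ, sᵢ > 0, with d₀ = d. For each layer i let Wᵢ ∈ ℝ^{cᵢ×rᵢ} be a convolutional weight and let γᵢ(Wᵢ) ∈ ℝ^{dᵢ×d_{i−1}} be the fully connected matrix built from Wᵢ via mᵢ = dᵢ/cᵢ fixed injective index maps. Define the hypothesis family H = { σ_L(γ_L(W_L) σ_{L−1}(γ_{L−1}(W_{L−1}) ⋯ σ₁(γ₁(W₁) X) ⋯)) : ‖Wᵢ‖_F ≤ aᵢ and ‖γᵢ(Wᵢ)‖_σ ≤ sᵢ for all i } ⊆ ℝ^{d_L×n}, and let R_W = (2∏_{i=1}^{L} ρᵢ sᵢ)·(Σ_{i=1}^{L} cᵢ² rᵢ² aᵢ √(dᵢ/cᵢ) / sᵢ)·L². Then for every ε > 0 there exists a finite set U of matrices in ℝ^{d_L×n} with ln|U| ≤ (‖X‖_F · R_W / ε)^{1/2} such that every element of H is within Frobenius distance ε of some element of U. -/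

import Mathlib

noncomputable def frobNorm {α β : Type*} [Fintype α] [Fintype β] (M : Matrix α β ℝ) : ℝ :=
  Real.sqrt (∑ i, ∑ j, (M i j) ^ 2)

noncomputable def specNorm {α β : Type*} [Fintype α] [Fintype β] [DecidableEq β]
    (M : Matrix α β ℝ) : ℝ :=
  ‖LinearMap.toContinuousLinearMap (Matrix.toEuclideanLin M)‖

/-- The fully connected matrix `γ(W)` built from a convolutional weight `W ∈ ℝ^{c×r}` via
`m` index maps `S k : Fin r → Fin d`. -/
noncomputable def gamma {c r d m : ℕ} (S : Fin m → Fin r → Fin d)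
    (W : Matrix (Fin c) (Fin r) ℝ) : Matrix (Fin c × Fin m) (Fin d) ℝ :=
  fun ik j => ∑ p, if S ik.2 p = j then W ik.1 p else 0

noncomputable def netOutput {n : ℕ} (d : ℕ → ℕ)
    (C : ∀ i : ℕ, Matrix (Fin (d (i+1))) (Fin (d i)) ℝ)
    (σ : ∀ i : ℕ, Matrix (Fin (d (i+1))) (Fin n) ℝ → Matrix (Fin (d (i+1))) (Fin n) ℝ)
    (X : Matrix (Fin (d 0)) (Fin n) ℝ) : (ℓ : ℕ) → Matrix (Fin (d ℓ)) (Fin n) ℝ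
  | 0 => X
  | (ℓ+1) => σ ℓ (C ℓ * netOutput d C σ X ℓ)

namespace CoverAux

variable {α β γ' : Type*} [Fintype α] [Fintype β] [Fintype γ']

/-- matrix to euclidean vector -/
noncomputable def m2e (M : Matrix α β ℝ) : EuclideanSpace ℝ (α × β) :=
  (WithLp.equiv 2 (α × β → ℝ)).symm (fun p => M p.1 p.2)

lemma m2e_sub (A B : Matrix α β ℝ) : m2e (A - B) = m2e A - m2e B := rfl

lemma frobNorm_eq_norm (M : Matrix α β ℝ) : frobNorm M = ‖m2e M‖ := by
  rw [EuclideanSpace.norm_eq, frobNorm]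
  congr 1
  rw [Fintype.sum_prod_type]
  exact Finset.sum_congr rfl fun i _ => Finset.sum_congr rfl fun j _ => by
    simp [m2e, Real.norm_eq_abs, sq_abs]

lemma frobNorm_nonneg (M : Matrix α β ℝ) : 0 ≤ frobNorm M := Real.sqrt_nonneg _

lemma frobNorm_zero : frobNorm (0 : Matrix α β ℝ) = 0 := by
  simp [frobNorm]

lemma frobNorm_add_le (A B : Matrix α β ℝ) :
    frobNorm (A + B) ≤ frobNorm A + frobNorm B := by
  have : m2e (A + B) = m2e A + m2e B := rfl
  rw [frobNorm_eq_norm, frobNorm_eq_norm, frobNorm_eq_norm, this]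
  exact norm_add_le _ _

lemma euclid_norm_sq {ι : Type*} [Fintype ι] (x : EuclideanSpace ℝ ι) :
    ‖x‖ ^ 2 = ∑ i, (x i) ^ 2 := by
  rw [EuclideanSpace.norm_eq, Real.sq_sqrt]
  · refine Finset.sum_congr rfl fun i _ => by simp [Real.norm_eq_abs, sq_abs]
  · positivity

lemma frobNorm_sq (M : Matrix α β ℝ) : frobNorm M ^ 2 = ∑ i, ∑ j, (M i j) ^ 2 := by
  rw [frobNorm, Real.sq_sqrt]; positivity

lemma specNorm_nonneg [DecidableEq β] (M : Matrix α β ℝ) : 0 ≤ specNorm M := norm_nonneg _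

lemma specNorm_zero [DecidableEq β] : specNorm (0 : Matrix α β ℝ) = 0 := by
  simp [specNorm, map_zero]

lemma specNorm_le_frobNorm [DecidableEq β] (M : Matrix α β ℝ) : specNorm M ≤ frobNorm M := by
  refine ContinuousLinearMap.opNorm_le_bound _ (frobNorm_nonneg M) fun x => ?_
  rw [LinearMap.coe_toContinuousLinearMap']
  have h1 : ‖Matrix.toEuclideanLin M x‖ ^ 2 ≤ (frobNorm M * ‖x‖) ^ 2 := by
    rw [euclid_norm_sq, mul_pow, frobNorm_sq, euclid_norm_sq, Finset.sum_mul]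
    refine Finset.sum_le_sum fun i _ => ?_
    have : (Matrix.toEuclideanLin M x) i = ∑ j, M i j * x j := by
      simp [Matrix.toEuclideanLin_apply, Matrix.mulVec, dotProduct]
    rw [this]
    exact Finset.sum_mul_sq_le_sq_mul_sq _ _ _
  have h2 : 0 ≤ frobNorm M * ‖x‖ := mul_nonneg (frobNorm_nonneg M) (norm_nonneg x)
  nlinarith [norm_nonneg (Matrix.toEuclideanLin M x)]

lemma frobNorm_mul_le [DecidableEq β] (A : Matrix α β ℝ) (B : Matrix β γ' ℝ) :
    frobNorm (A * B) ≤ specNorm A * frobNorm B := by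
  have hrhs : 0 ≤ specNorm A * frobNorm B :=
    mul_nonneg (specNorm_nonneg A) (frobNorm_nonneg B)
  have h : frobNorm (A * B) ^ 2 ≤ (specNorm A * frobNorm B) ^ 2 := by
    rw [frobNorm_sq, mul_pow, frobNorm_sq]
    calc ∑ i, ∑ j, ((A * B) i j) ^ 2 = ∑ j, ∑ i, ((A * B) i j) ^ 2 := Finset.sum_comm
      _ ≤ ∑ j : γ', specNorm A ^ 2 * ∑ k, (B k j) ^ 2 := ?_
      _ = specNorm A ^ 2 * ∑ k, ∑ j, (B k j) ^ 2 := by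
          rw [← Finset.mul_sum, Finset.sum_comm]
    refine Finset.sum_le_sum fun j _ => ?_
    set xj : EuclideanSpace ℝ β := (WithLp.equiv 2 (β → ℝ)).symm (fun k => B k j) with hxj
    have hcol : ∀ i, (A * B) i j = (Matrix.toEuclideanLin A xj) i := by
      intro i
      simp [Matrix.mul_apply, Matrix.toEuclideanLin_apply, Matrix.mulVec, dotProduct, hxj]
    calc ∑ i, ((A * B) i j) ^ 2 = ‖Matrix.toEuclideanLin A xj‖ ^ 2 := by
          rw [euclid_norm_sq]; exact Finset.sum_congr rfl fun i _ => by rw [hcol]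
      _ ≤ (specNorm A * ‖xj‖) ^ 2 := by
          have := (LinearMap.toContinuousLinearMap (Matrix.toEuclideanLin A)).le_opNorm xj
          rw [LinearMap.coe_toContinuousLinearMap'] at this
          have h0 : 0 ≤ ‖Matrix.toEuclideanLin A xj‖ := norm_nonneg _
          rw [show ‖LinearMap.toContinuousLinearMap (Matrix.toEuclideanLin A)‖ = specNorm A
            from rfl] at this
          exact pow_le_pow_left₀ h0 this 2
      _ = specNorm A ^ 2 * ∑ k, (B k j) ^ 2 := by
          rw [mul_pow, euclid_norm_sq]
          congr 1
  nlinarith [frobNorm_nonneg (A * B)]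

lemma gamma_zero {c r d m : ℕ} (S : Fin m → Fin r → Fin d) :
    gamma (c := c) S 0 = 0 := by
  ext ik j; simp [gamma]

lemma gamma_sub {c r d m : ℕ} (S : Fin m → Fin r → Fin d)
    (W W' : Matrix (Fin c) (Fin r) ℝ) :
    gamma S W - gamma S W' = gamma S (W - W') := by
  ext ik j
  simp only [gamma, Matrix.sub_apply, ← Finset.sum_sub_distrib]
  refine Finset.sum_congr rfl fun p _ => ?_
  split_ifs <;> simp

lemma gamma_row_sq {c r d m : ℕ} (S : Fin m → Fin r → Fin d)
    (hS : ∀ k, Function.Injective (S k)) (W : Matrix (Fin c) (Fin r) ℝ)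
    (i : Fin c) (k : Fin m) :
    ∑ j, (∑ p, if S k p = j then W i p else 0) ^ 2 = ∑ p, (W i p) ^ 2 := by
  have expand : ∀ j : Fin d, (∑ p, if S k p = j then W i p else 0) ^ 2
      = ∑ p, ∑ q, (if S k p = j then W i p else 0) * (if S k q = j then W i q else 0) := by
    intro j
    rw [sq, Finset.sum_mul_sum]
  simp_rw [expand]
  rw [Finset.sum_comm]
  have : ∀ p : Fin r, ∑ j : Fin d, ∑ q : Fin r,
      (if S k p = j then W i p else 0) * (if S k q = j then W i q else 0) = (W i p)^2 := by
    intro p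
    rw [Finset.sum_comm]
    have inner : ∀ q : Fin r, ∑ j : Fin d,
        (if S k p = j then W i p else 0) * (if S k q = j then W i q else 0)
        = if q = p then (W i p)^2 else 0 := by
      intro q
      have : ∀ j : Fin d, (if S k p = j then W i p else 0) * (if S k q = j then W i q else 0)
          = if S k p = j then ((if S k q = j then W i p * W i q else 0)) else 0 := by
        intro j; split_ifs <;> simp_all
      simp_rw [this]
      rw [Finset.sum_ite_eq Finset.univ (S k p) (fun j => if S k q = j then W i p * W i q else 0)]
      simp only [Finset.mem_univ, if_true]
      by_cases hq : q = p
      · subst hq; simp [sq]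
      · have : ¬ (S k q = S k p) := fun h => hq ((hS k) h)
        simp [this, hq]
    simp_rw [inner]
    simp
  simp_rw [this]

lemma frobNorm_gamma {c r d m : ℕ} (S : Fin m → Fin r → Fin d)
    (hS : ∀ k, Function.Injective (S k)) (W : Matrix (Fin c) (Fin r) ℝ) :
    frobNorm (gamma S W) = Real.sqrt m * frobNorm W := by
  rw [frobNorm, frobNorm, ← Real.sqrt_mul (by positivity : (0:ℝ) ≤ (m:ℝ))]
  congr 1
  rw [Fintype.sum_prod_type]
  calc ∑ i : Fin c, ∑ k : Fin m, ∑ j, (gamma S W (i,k) j) ^ 2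
      = ∑ i : Fin c, ∑ k : Fin m, ∑ p, (W i p) ^ 2 := by
        refine Finset.sum_congr rfl fun i _ => Finset.sum_congr rfl fun k _ => ?_
        exact gamma_row_sq S hS W i k
    _ = (m:ℝ) * ∑ i, ∑ p, (W i p) ^ 2 := by
        simp [Finset.sum_const, Finset.mul_sum]

lemma frobNorm_reindex {γ'' : Type*} [Fintype γ'']
    (e : α ≃ γ'') (M : Matrix α β ℝ) :
    frobNorm (Matrix.reindex e (Equiv.refl β) M) = frobNorm M := by
  rw [frobNorm, frobNorm]
  congr 1
  rw [← Equiv.sum_comp e (fun i => ∑ j, (Matrix.reindex e (Equiv.refl β) M i j) ^ 2)]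
  refine Finset.sum_congr rfl fun i _ => Finset.sum_congr rfl fun j _ => ?_
  simp [Matrix.reindex_apply]

lemma reindex_sub {γ'' : Type*} [Fintype γ'']
    (e : α ≃ γ'') (A B : Matrix α β ℝ) :
    Matrix.reindex e (Equiv.refl β) A - Matrix.reindex e (Equiv.refl β) B
      = Matrix.reindex e (Equiv.refl β) (A - B) := by
  ext i j; simp [Matrix.reindex_apply, Matrix.submatrix_apply, Matrix.sub_apply]

open MeasureTheory Metric
open scoped ENNReal

lemma sep_card_bound {ι : Type*} [Fintype ι] (A δ : ℝ) (hA : 0 ≤ A) (hδ : 0 < δ)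
    (S : Finset (EuclideanSpace ℝ ι)) (hSA : ∀ x ∈ S, ‖x‖ ≤ A)
    (hsep : ∀ x ∈ S, ∀ y ∈ S, x ≠ y → δ < dist x y) :
    (S.card : ℝ) ≤ ((2 * A + δ) / δ) ^ (Fintype.card ι) := by
  classical
  have hdisj : (↑S : Set (EuclideanSpace ℝ ι)).PairwiseDisjoint (fun x => ball x (δ/2)) := by
    intro x hx y hy hxy
    refine Set.disjoint_left.2 fun z hzx hzy => ?_
    have := hsep x hx y hy hxy
    have hd : dist x y ≤ dist x z + dist z y := dist_triangle x z y
    rw [mem_ball] at hzx hzy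
    rw [dist_comm x z] at hd
    linarith
  have hunion : (⋃ x ∈ S, ball x (δ/2)) ⊆ closedBall (0:EuclideanSpace ℝ ι) (A + δ/2) := by
    refine Set.iUnion₂_subset fun x hx => ?_
    refine (ball_subset_closedBall).trans (closedBall_subset_closedBall' ?_)
    rw [dist_zero_right]
    linarith [hSA x hx]
  have hmeas := measure_biUnion_finset (μ := volume) hdisj
    (fun x _ => measurableSet_ball)
  have hle : ∑ x ∈ S, volume (ball x (δ/2))
      ≤ volume (closedBall (0:EuclideanSpace ℝ ι) (A + δ/2)) := by
    rw [← hmeas]; exact measure_mono hunion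
  have hballval : ∀ x : EuclideanSpace ℝ ι, volume (ball x (δ/2))
      = ENNReal.ofReal ((δ/2) ^ (Fintype.card ι)) * volume (ball (0:EuclideanSpace ℝ ι) 1) := by
    intro x
    rw [Measure.addHaar_ball_of_pos volume x (by linarith), finrank_euclideanSpace]
  have hcbval : volume (closedBall (0:EuclideanSpace ℝ ι) (A + δ/2))
      = ENNReal.ofReal ((A + δ/2) ^ (Fintype.card ι))
        * volume (ball (0:EuclideanSpace ℝ ι) 1) := by
    rw [Measure.addHaar_closedBall volume _ (by linarith), finrank_euclideanSpace]
  simp_rw [hballval, Finset.sum_const, hcbval] at hle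
  have hvpos : volume (ball (0:EuclideanSpace ℝ ι) 1) ≠ 0 :=
    (measure_ball_pos volume _ (by norm_num)).ne'
  have hvlt : volume (ball (0:EuclideanSpace ℝ ι) 1) ≠ ⊤ := measure_ball_lt_top.ne
  rw [nsmul_eq_mul, ← mul_assoc, ENNReal.mul_le_mul_iff_left hvpos hvlt] at hle
  have hreal : (S.card : ℝ) * (δ/2) ^ (Fintype.card ι) ≤ (A + δ/2) ^ (Fintype.card ι) := by
    have h1 : ((S.card : ℝ≥0∞)) = ENNReal.ofReal (S.card : ℝ) := by
      rw [ENNReal.ofReal_natCast]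
    rw [h1, ← ENNReal.ofReal_mul (by positivity)] at hle
    exact (ENNReal.ofReal_le_ofReal_iff (by positivity)).1 hle
  have hpow : ((2 * A + δ) / δ) ^ (Fintype.card ι)
      = (A + δ/2) ^ (Fintype.card ι) / (δ/2) ^ (Fintype.card ι) := by
    rw [← div_pow]
    congr 1
    field_simp
  rw [hpow, le_div_iff₀ (by positivity)]
  exact hreal

lemma packing {ι : Type*} [Fintype ι] (K : Set (EuclideanSpace ℝ ι)) (A δ : ℝ)
    (hA : 0 ≤ A) (hδ : 0 < δ) (hK : ∀ x ∈ K, ‖x‖ ≤ A) :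
    ∃ S : Finset (EuclideanSpace ℝ ι), ↑S ⊆ K ∧
      (∀ w ∈ K, ∃ x ∈ S, ‖w - x‖ ≤ δ) ∧
      (S.card : ℝ) ≤ ((2 * A + δ) / δ) ^ (Fintype.card ι) := by
  classical
  set P : Finset (EuclideanSpace ℝ ι) → Prop := fun S =>
    ↑S ⊆ K ∧ ∀ x ∈ S, ∀ y ∈ S, x ≠ y → δ < dist x y with hP
  have hbound : ∀ S, P S → (S.card : ℝ) ≤ ((2 * A + δ) / δ) ^ (Fintype.card ι) := by
    intro S hS
    exact sep_card_bound A δ hA hδ S (fun x hx => hK x (hS.1 hx)) hS.2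
  have hbddN : ∀ S, P S → S.card ≤ ⌊((2 * A + δ) / δ) ^ (Fintype.card ι)⌋₊ := by
    intro S hS
    exact Nat.le_floor (hbound S hS)
  set cards : Set ℕ := {k | ∃ S, P S ∧ S.card = k} with hcards
  have hne : cards.Nonempty := ⟨0, ∅, ⟨by simp, by simp⟩, rfl⟩
  have hbdd : BddAbove cards := by
    refine ⟨⌊((2 * A + δ) / δ) ^ (Fintype.card ι)⌋₊, fun k hk => ?_⟩
    obtain ⟨S, hS, rfl⟩ := hk
    exact hbddN S hS
  obtain ⟨S, hS, hcardS⟩ : ∃ S, P S ∧ S.card = sSup cards := Nat.sSup_mem hne hbdd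
  refine ⟨S, hS.1, ?_, hbound S hS⟩
  intro w hw
  by_contra hcon
  push_neg at hcon
  have hwS : w ∉ S := fun hmem => by
    have := hcon w hmem
    rw [sub_self, norm_zero] at this
    linarith
  have hP' : P (insert w S) := by
    constructor
    · rw [Finset.coe_insert]
      exact Set.insert_subset hw hS.1
    · intro x hx y hy hxy
      rcases Finset.mem_insert.1 hx with hxw | hx' <;>
        rcases Finset.mem_insert.1 hy with hyw | hy'
      · exact absurd (hxw.trans hyw.symm) hxy
      · subst hxw
        rw [dist_eq_norm]
        exact hcon y hy'
      · subst hyw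
        rw [dist_comm, dist_eq_norm]
        exact hcon x hx'
      · exact hS.2 x hx' y hy' hxy
  have : (insert w S).card ∈ cards := ⟨insert w S, hP', rfl⟩
  have hle := le_csSup hbdd this
  rw [Finset.card_insert_of_notMem hwS, hcardS] at hle
  omega

lemma log_three_le : Real.log 3 ≤ 1.16 := by
  rw [Real.log_le_iff_le_exp (by norm_num)]
  have h := Real.add_one_le_exp (1.16/16 : ℝ)
  have h16 : (1.16/16 + 1 : ℝ) ^ 16 ≤ Real.exp (1.16/16) ^ 16 :=
    pow_le_pow_left₀ (by norm_num) h 16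
  rw [← Real.exp_nat_mul] at h16
  have : ((16:ℕ):ℝ) * (1.16/16) = 1.16 := by norm_num
  rw [this] at h16
  refine le_trans ?_ h16
  norm_num

lemma log_ineq {t : ℝ} (ht : 1 ≤ t) : Real.log (1 + 2*t) ≤ Real.sqrt (2*t) := by
  have ht0 : (0:ℝ) < t := by linarith
  set u := Real.sqrt (Real.sqrt t) with hu
  have hst : 0 ≤ Real.sqrt t := Real.sqrt_nonneg t
  have hu1 : 1 ≤ u := Real.one_le_sqrt.2 (Real.one_le_sqrt.2 ht)
  have hu2 : u ^ 2 = Real.sqrt t := Real.sq_sqrt hst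
  have hlogt : Real.log t = 4 * Real.log u := by
    rw [hu, Real.log_sqrt hst, Real.log_sqrt ht0.le]; ring
  have hlogu : Real.log u ≤ u - 1 := Real.log_le_sub_one_of_pos (by linarith)
  have hs2 : Real.sqrt 2 ≤ 1.42 := by
    rw [show (1.42:ℝ) = Real.sqrt (1.42^2) from (Real.sqrt_sq (by norm_num)).symm]
    exact Real.sqrt_le_sqrt (by norm_num)
  have hs2' : 0 ≤ Real.sqrt 2 := Real.sqrt_nonneg 2
  have h1 : Real.log (1 + 2*t) ≤ Real.log (3 * t) :=
    Real.log_le_log (by linarith) (by linarith)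
  have h2 : Real.log (3 * t) = Real.log 3 + Real.log t :=
    Real.log_mul (by norm_num) (by linarith)
  have key : Real.log 3 + 4 * (u - 1) ≤ Real.sqrt 2 * u ^ 2 := by
    have hquad : Real.sqrt 2 * (u - Real.sqrt 2) ^ 2 ≥ 0 := by positivity
    have hsq2 : Real.sqrt 2 ^ 2 = 2 := Real.sq_sqrt (by norm_num)
    have hl3 : Real.log 3 ≤ 4 - 2 * Real.sqrt 2 := by
      have := log_three_le
      nlinarith
    nlinarith
  have hfin : Real.sqrt (2 * t) = Real.sqrt 2 * u ^ 2 := by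
    rw [Real.sqrt_mul (by norm_num) t, hu2]
  rw [hfin]
  calc Real.log (1 + 2*t) ≤ Real.log 3 + Real.log t := by rw [← h2]; exact h1
    _ = Real.log 3 + 4 * Real.log u := by rw [hlogt]
    _ ≤ Real.log 3 + 4 * (u - 1) := by linarith
    _ ≤ Real.sqrt 2 * u ^ 2 := key

end CoverAux

/-- covering number bound for fully convolutional networks: for every ε > 0
there is a finite set `U` with `ln |U| ≤ (‖X‖_F · R_W / ε)^(1/2)` that ε-covers all outputs
of depth-`L` networks whose layers are `γᵢ(Wᵢ)` with `‖Wᵢ‖_F ≤ aᵢ` and `‖γᵢ(Wᵢ)‖_σ ≤ sᵢ`,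
where `R_W = (2∏ ρᵢ sᵢ)·(Σ cᵢ² rᵢ² aᵢ √(dᵢ/cᵢ)/sᵢ)·L²`. -/
theorem covering_number_fcnn (L n : ℕ) (d c r m : ℕ → ℕ)
    (hd : ∀ i < L, d (i+1) = c i * m i)
    (Smap : ∀ i : ℕ, Fin (m i) → Fin (r i) → Fin (d i))
    (hSmap : ∀ i < L, ∀ k, Function.Injective (Smap i k))
    (X : Matrix (Fin (d 0)) (Fin n) ℝ)
    (σ : ∀ i : ℕ, Matrix (Fin (d (i+1))) (Fin n) ℝ → Matrix (Fin (d (i+1))) (Fin n) ℝ)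
    (ρ s a : ℕ → ℝ)
    (hρ : ∀ i < L, 0 ≤ ρ i) (hs : ∀ i < L, 0 < s i) (ha : ∀ i < L, 0 < a i)
    (hσ : ∀ i < L, ∀ A B : Matrix (Fin (d (i+1))) (Fin n) ℝ,
      frobNorm (σ i A - σ i B) ≤ ρ i * frobNorm (A - B))
    (hσ0 : ∀ i < L, σ i 0 = 0) :
    ∀ ε > (0 : ℝ), ∃ U : Finset (Matrix (Fin (d L)) (Fin n) ℝ),
      Real.log U.card ≤ Real.sqrt (frobNorm X *
        ((2 * ∏ i ∈ Finset.range L, ρ i * s i) *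
          (∑ i ∈ Finset.range L,
            (c i : ℝ) ^ 2 * (r i : ℝ) ^ 2 * a i * Real.sqrt ((d (i+1) : ℝ) / (c i : ℝ)) / s i) *
          (L : ℝ) ^ 2) / ε) ∧
      ∀ C : ∀ i : ℕ, Matrix (Fin (d (i+1))) (Fin (d i)) ℝ,
        (∀ i (hi : i < L), specNorm (C i) ≤ s i ∧
          ∃ W : Matrix (Fin (c i)) (Fin (r i)) ℝ, frobNorm W ≤ a i ∧
            C i = Matrix.reindex (finProdFinEquiv.trans (finCongr (hd i hi).symm))
              (Equiv.refl (Fin (d i))) (gamma (Smap i) W)) →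
        ∃ u ∈ U, frobNorm (netOutput d C σ X L - u) ≤ ε := by
  classical
  intro ε hε
  open CoverAux in
  set Pi : ℝ := ∏ i ∈ Finset.range L, ρ i * s i with hPidef
  -- growth bound, for any C with bounded spectral norms
  have hgrow : ∀ (C : ∀ i : ℕ, Matrix (Fin (d (i+1))) (Fin (d i)) ℝ),
      (∀ i, i < L → specNorm (C i) ≤ s i) → ∀ ℓ, ℓ ≤ L →
      frobNorm (netOutput d C σ X ℓ)
        ≤ (∏ j ∈ Finset.range ℓ, ρ j * s j) * frobNorm X := by
    intro C hC ℓ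
    induction ℓ with
    | zero =>
      intro _
      simp only [netOutput, Finset.range_zero, Finset.prod_empty, one_mul]
      exact le_refl _
    | succ ℓ ih =>
      intro hℓ
      have hℓL : ℓ < L := hℓ
      have hih := ih (le_of_lt hℓL)
      have hdefs : netOutput d C σ X (ℓ+1) = σ ℓ (C ℓ * netOutput d C σ X ℓ) := rfl
      rw [hdefs]
      have hY := hσ ℓ hℓL (C ℓ * netOutput d C σ X ℓ) 0
      rw [hσ0 ℓ hℓL, sub_zero, sub_zero] at hY
      have hmul := CoverAux.frobNorm_mul_le (C ℓ) (netOutput d C σ X ℓ)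
      have hρℓ := hρ ℓ hℓL
      have hsℓ := hs ℓ hℓL
      have hCs := hC ℓ hℓL
      have hnn1 := CoverAux.frobNorm_nonneg (netOutput d C σ X ℓ)
      have hnn2 := CoverAux.specNorm_nonneg (C ℓ)
      have hnnX := CoverAux.frobNorm_nonneg X
      have hPrd : (0:ℝ) ≤ ∏ j ∈ Finset.range ℓ, ρ j * s j :=
        Finset.prod_nonneg fun j hj =>
          mul_nonneg (hρ j (lt_of_lt_of_le (Finset.mem_range.1 hj) (le_of_lt hℓL)))
            (hs j (lt_of_lt_of_le (Finset.mem_range.1 hj) (le_of_lt hℓL))).le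
      have step : frobNorm (σ ℓ (C ℓ * netOutput d C σ X ℓ))
          ≤ ρ ℓ * (s ℓ * ((∏ j ∈ Finset.range ℓ, ρ j * s j) * frobNorm X)) := by
        have h3 : frobNorm (C ℓ * netOutput d C σ X ℓ)
            ≤ s ℓ * ((∏ j ∈ Finset.range ℓ, ρ j * s j) * frobNorm X) := by
          calc frobNorm (C ℓ * netOutput d C σ X ℓ)
              ≤ specNorm (C ℓ) * frobNorm (netOutput d C σ X ℓ) := hmul
            _ ≤ s ℓ * ((∏ j ∈ Finset.range ℓ, ρ j * s j) * frobNorm X) :=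
                mul_le_mul hCs hih hnn1 (le_trans hnn2 hCs)
        calc frobNorm (σ ℓ (C ℓ * netOutput d C σ X ℓ))
            ≤ ρ ℓ * frobNorm (C ℓ * netOutput d C σ X ℓ) := hY
          _ ≤ ρ ℓ * (s ℓ * ((∏ j ∈ Finset.range ℓ, ρ j * s j) * frobNorm X)) :=
              mul_le_mul_of_nonneg_left h3 hρℓ
      calc frobNorm (σ ℓ (C ℓ * netOutput d C σ X ℓ))
          ≤ ρ ℓ * (s ℓ * ((∏ j ∈ Finset.range ℓ, ρ j * s j) * frobNorm X)) := step
        _ = (∏ j ∈ Finset.range (ℓ+1), ρ j * s j) * frobNorm X := by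
            rw [Finset.prod_range_succ]; ring
  by_cases hcase : Pi * frobNorm X ≤ ε
  · -- trivial cover by {0}
    refine ⟨{0}, ?_, ?_⟩
    · simp only [Finset.card_singleton, Nat.cast_one, Real.log_one]
      exact Real.sqrt_nonneg _
    · intro C hC
      refine ⟨0, Finset.mem_singleton_self 0, ?_⟩
      rw [sub_zero]
      exact le_trans (hgrow C (fun i hi => (hC i hi).1) L (le_refl L)) hcase
  · push_neg at hcase
    have hXnn := CoverAux.frobNorm_nonneg X
    have hPinn : 0 ≤ Pi := Finset.prod_nonneg fun j hj =>
      mul_nonneg (hρ j (Finset.mem_range.1 hj)) (hs j (Finset.mem_range.1 hj)).le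
    have hXpos : 0 < frobNorm X := by
      rcases lt_or_eq_of_le hXnn with h | h
      · exact h
      · exfalso; rw [← h, mul_zero] at hcase; linarith
    have hPipos : 0 < Pi := by
      rcases lt_or_eq_of_le hPinn with h | h
      · exact h
      · exfalso; rw [← h, zero_mul] at hcase; linarith
    have hfac : ∀ j, j < L → 0 < ρ j * s j := by
      intro j hj
      rcases lt_or_eq_of_le (mul_nonneg (hρ j hj) (hs j hj).le) with h | h
      · exact h
      · exfalso
        have hz : Pi = 0 := Finset.prod_eq_zero (Finset.mem_range.2 hj) h.symm
        rw [hz] at hPipos; exact lt_irrefl 0 hPipos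
    set κ : ℕ → ℝ := fun i => ε * s i / ((L:ℝ) * Pi * frobNorm X) with hκdef
    have hκpos : ∀ i, i < L → 0 < κ i := by
      intro i hi
      have hL0 : 0 < (L:ℝ) := by exact_mod_cast Nat.pos_of_ne_zero (by omega)
      have : 0 < (L:ℝ) * Pi * frobNorm X := mul_pos (mul_pos hL0 hPipos) hXpos
      exact div_pos (mul_pos hε (hs i hi)) this
    set CiOf : ∀ (i : ℕ), i < L → Matrix (Fin (c i)) (Fin (r i)) ℝ →
        Matrix (Fin (d (i+1))) (Fin (d i)) ℝ :=
      fun i hi W => Matrix.reindex (finProdFinEquiv.trans (finCongr (hd i hi).symm))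
        (Equiv.refl (Fin (d i))) (gamma (Smap i) W) with hCiOf
    have hCiOf0 : ∀ (i : ℕ) (hi : i < L), CiOf i hi 0 = 0 := by
      intro i hi
      rw [hCiOf]
      simp only [CoverAux.gamma_zero]
      ext x y
      simp [Matrix.reindex_apply]
    have hdiffb : ∀ (i : ℕ) (hi : i < L) (W W' : Matrix (Fin (c i)) (Fin (r i)) ℝ),
        specNorm (CiOf i hi W - CiOf i hi W') ≤ Real.sqrt (m i) * frobNorm (W - W') := by
      intro i hi W W'
      calc specNorm (CiOf i hi W - CiOf i hi W')
          ≤ frobNorm (CiOf i hi W - CiOf i hi W') := CoverAux.specNorm_le_frobNorm _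
        _ = Real.sqrt (m i) * frobNorm (W - W') := by
            rw [hCiOf]
            simp only
            rw [CoverAux.reindex_sub, CoverAux.frobNorm_reindex, CoverAux.gamma_sub,
              CoverAux.frobNorm_gamma (Smap i) (hSmap i hi) (W - W')]
    -- per-layer covers
    have hcover : ∀ i : Fin L, ∃ G : Finset (Matrix (Fin (c i)) (Fin (r i)) ℝ),
        G.Nonempty ∧
        (∀ W' ∈ G, specNorm (CiOf i i.isLt W') ≤ s i) ∧
        (∀ W : Matrix (Fin (c i)) (Fin (r i)) ℝ, frobNorm W ≤ a i →
          specNorm (CiOf i i.isLt W) ≤ s i →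
          ∃ W' ∈ G, specNorm (CiOf i i.isLt W - CiOf i i.isLt W') ≤ κ i) ∧
        Real.log ((G.card : ℝ))
          ≤ ((c i * r i : ℕ) : ℝ) * Real.sqrt (2 * (Real.sqrt (m i) * a i / κ i)) := by
      intro i
      have hi : (i : ℕ) < L := i.isLt
      have hκi := hκpos i hi
      have hai := ha i hi
      have hsmnn : (0:ℝ) ≤ Real.sqrt (m i) := Real.sqrt_nonneg _
      set t : ℝ := Real.sqrt (m i) * a i / κ i with htdef
      have htnn : 0 ≤ t := div_nonneg (mul_nonneg hsmnn hai.le) hκi.le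
      by_cases hti : t ≤ 1
      · -- trivial singleton cover
        refine ⟨{0}, ⟨0, Finset.mem_singleton_self 0⟩, ?_, ?_, ?_⟩
        · intro W' hW'
          rw [Finset.mem_singleton.1 hW', hCiOf0 i hi]
          rw [CoverAux.specNorm_zero]
          exact (hs i hi).le
        · intro W hWa hWs
          refine ⟨0, Finset.mem_singleton_self 0, ?_⟩
          have h1 := hdiffb i hi W 0
          rw [sub_zero] at h1
          have h2 : Real.sqrt (m i) * frobNorm W ≤ Real.sqrt (m i) * a i :=
            mul_le_mul_of_nonneg_left hWa hsmnn
          have h3 : Real.sqrt (m i) * a i = t * κ i := by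
            rw [htdef]; field_simp
          have h4 : t * κ i ≤ κ i := by
            nlinarith
          calc specNorm (CiOf i i.isLt W - CiOf i i.isLt 0)
              ≤ Real.sqrt (m i) * frobNorm W := h1
            _ ≤ Real.sqrt (m i) * a i := h2
            _ = t * κ i := h3
            _ ≤ κ i := h4
        · simp only [Finset.card_singleton, Nat.cast_one, Real.log_one]
          positivity
      · push_neg at hti
        have hsmpos : 0 < Real.sqrt (m i) := by
          rcases lt_or_eq_of_le hsmnn with h | h
          · exact h
          · exfalso
            rw [htdef, ← h, zero_mul, zero_div] at hti
            linarith
        set δ : ℝ := κ i / Real.sqrt (m i) with hδdef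
        have hδpos : 0 < δ := div_pos hκi hsmpos
        set Kset : Set (Matrix (Fin (c i)) (Fin (r i)) ℝ) :=
          {W | frobNorm W ≤ a i ∧ specNorm (CiOf i i.isLt W) ≤ s i} with hKset
        obtain ⟨S, hSsub, hScov, hScard⟩ := CoverAux.packing (CoverAux.m2e '' Kset)
          (a i) δ hai.le hδpos (by
            rintro x ⟨W, hWK, rfl⟩
            rw [← CoverAux.frobNorm_eq_norm]
            exact hWK.1)
        set e2m : EuclideanSpace ℝ (Fin (c i) × Fin (r i)) → Matrix (Fin (c i)) (Fin (r i)) ℝ :=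
          fun x => Matrix.of (fun p q => x (p, q)) with he2mdef
        have he2m : ∀ W : Matrix (Fin (c i)) (Fin (r i)) ℝ, e2m (CoverAux.m2e W) = W :=
          fun W => rfl
        have hKmem : ∀ x ∈ S, e2m x ∈ Kset := by
          intro x hx
          obtain ⟨W₀, hW₀, rfl⟩ := hSsub hx
          rw [he2m]
          exact hW₀
        refine ⟨S.image e2m, ?_, ?_, ?_, ?_⟩
        · -- nonempty
          have h0K : (0 : Matrix (Fin (c i)) (Fin (r i)) ℝ) ∈ Kset := by
            constructor
            · rw [CoverAux.frobNorm_zero]; exact hai.le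
            · rw [hCiOf0 i i.isLt, CoverAux.specNorm_zero]; exact (hs i hi).le
          obtain ⟨x, hxS, _⟩ := hScov (CoverAux.m2e 0) ⟨0, h0K, rfl⟩
          exact ⟨e2m x, Finset.mem_image_of_mem e2m hxS⟩
        · intro W' hW'
          obtain ⟨x, hxS, rfl⟩ := Finset.mem_image.1 hW'
          exact (hKmem x hxS).2
        · intro W hWa hWs
          obtain ⟨x, hxS, hxd⟩ := hScov (CoverAux.m2e W) ⟨W, ⟨hWa, hWs⟩, rfl⟩
          refine ⟨e2m x, Finset.mem_image_of_mem e2m hxS, ?_⟩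
          obtain ⟨W₀, hW₀, rfl⟩ := hSsub hxS
          rw [he2m]
          have h1 := hdiffb i i.isLt W W₀
          have h2 : frobNorm (W - W₀) ≤ δ := by
            rw [CoverAux.frobNorm_eq_norm, CoverAux.m2e_sub]
            exact hxd
          have h3 : Real.sqrt (m i) * frobNorm (W - W₀) ≤ Real.sqrt (m i) * δ :=
            mul_le_mul_of_nonneg_left h2 hsmnn
          have h4 : Real.sqrt (m i) * δ = κ i := by
            rw [hδdef, mul_div_cancel₀ _ hsmpos.ne']
          calc specNorm (CiOf i i.isLt W - CiOf i i.isLt W₀)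
              ≤ Real.sqrt (m i) * frobNorm (W - W₀) := h1
            _ ≤ Real.sqrt (m i) * δ := h3
            _ = κ i := h4
        · -- cardinality
          have hcard1 : ((S.image e2m).card : ℝ) ≤ (S.card : ℝ) := by
            exact_mod_cast Finset.card_image_le
          have hcardprod : (Fintype.card (Fin (c i) × Fin (r i))) = c i * r i := by
            simp [Fintype.card_prod]
          rw [hcardprod] at hScard
          have hratio : (2 * a i + δ) / δ = 1 + 2 * t := by
            rw [htdef, hδdef]
            field_simp
            ring
          rw [hratio] at hScard
          have hpos : (0:ℝ) < ((S.image e2m).card : ℝ) := by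
            have : 0 < (S.image e2m).card := by
              apply Finset.card_pos.2
              obtain ⟨x, hxS, _⟩ := hScov (CoverAux.m2e 0) ⟨0, by
                constructor
                · rw [CoverAux.frobNorm_zero]; exact hai.le
                · rw [hCiOf0 i i.isLt, CoverAux.specNorm_zero]; exact (hs i hi).le, rfl⟩
              exact ⟨e2m x, Finset.mem_image_of_mem e2m hxS⟩
            exact_mod_cast this
          have hlog1 : Real.log ((S.image e2m).card : ℝ)
              ≤ Real.log ((1 + 2*t) ^ (c i * r i)) :=
            Real.log_le_log hpos (le_trans hcard1 hScard)
          rw [Real.log_pow] at hlog1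
          refine le_trans hlog1 ?_
          have hlog2 : Real.log (1 + 2*t) ≤ Real.sqrt (2*t) := CoverAux.log_ineq hti.le
          have : Real.sqrt (2 * t) = Real.sqrt (2 * (Real.sqrt (m i) * a i / κ i)) := by
            rw [htdef]
          rw [← this]
          push_cast
          refine mul_le_mul_of_nonneg_left hlog2 ?_
          positivity
    choose G hGne hGspec hGcov hGlog using hcover
    set CC : (∀ i : Fin L, Matrix (Fin (c i)) (Fin (r i)) ℝ) →
        ∀ i : ℕ, Matrix (Fin (d (i+1))) (Fin (d i)) ℝ :=
      fun g i => if h : i < L then CiOf i h (g ⟨i, h⟩) else 0 with hCC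
    refine ⟨(Fintype.piFinset G).image (fun g => netOutput d (CC g) σ X L), ?_, ?_⟩
    · -- log cardinality bound
      have hcardle : (((Fintype.piFinset G).image
            (fun g => netOutput d (CC g) σ X L)).card : ℝ)
          ≤ ∏ i : Fin L, ((G i).card : ℝ) := by
        have h1 : ((Fintype.piFinset G).image (fun g => netOutput d (CC g) σ X L)).card
            ≤ (Fintype.piFinset G).card := Finset.card_image_le
        rw [Fintype.card_piFinset] at h1
        exact_mod_cast h1
      have hGpos : ∀ i : Fin L, (0:ℝ) < ((G i).card : ℝ) := fun i => by
        exact_mod_cast Finset.card_pos.2 (hGne i)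
      have hlogU : Real.log (((Fintype.piFinset G).image
            fun g => netOutput d (CC g) σ X L).card : ℝ)
          ≤ ∑ i : Fin L, Real.log ((G i).card : ℝ) := by
        rcases Nat.eq_zero_or_pos ((Fintype.piFinset G).image
            fun g => netOutput d (CC g) σ X L).card with h0 | hp
        · rw [h0]
          simp only [Nat.cast_zero, Real.log_zero]
          refine Finset.sum_nonneg fun i _ => Real.log_nonneg ?_
          exact_mod_cast Finset.card_pos.2 (hGne i)
        · calc Real.log (((Fintype.piFinset G).image
                fun g => netOutput d (CC g) σ X L).card : ℝ)
              ≤ Real.log (∏ i : Fin L, ((G i).card:ℝ)) :=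
                Real.log_le_log (by exact_mod_cast hp) hcardle
            _ = ∑ i : Fin L, Real.log ((G i).card : ℝ) :=
                Real.log_prod (fun i _ => (hGpos i).ne')
      have hsum1 : ∑ i : Fin L, Real.log ((G i).card : ℝ)
          ≤ ∑ i : Fin L, ((c i * r i : ℕ):ℝ)
            * Real.sqrt (2 * (Real.sqrt (m i) * a i / κ i)) :=
        Finset.sum_le_sum fun i _ => hGlog i
      have hsum2 : ∑ i : Fin L, ((c (i:ℕ) * r (i:ℕ) : ℕ):ℝ)
            * Real.sqrt (2 * (Real.sqrt (m (i:ℕ)) * a (i:ℕ) / κ (i:ℕ)))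
          = ∑ j ∈ Finset.range L, ((c j * r j : ℕ):ℝ)
            * Real.sqrt (2 * (Real.sqrt (m j) * a j / κ j)) :=
        Fin.sum_univ_eq_sum_range
          (fun j => ((c j * r j : ℕ):ℝ) * Real.sqrt (2 * (Real.sqrt (m j) * a j / κ j))) L
      have hfnn : ∀ j ∈ Finset.range L, 0 ≤ ((c j * r j : ℕ):ℝ)
          * Real.sqrt (2 * (Real.sqrt (m j) * a j / κ j)) :=
        fun j _ => mul_nonneg (by positivity) (Real.sqrt_nonneg _)
      have hCS := sq_sum_le_card_mul_sum_sq (s := Finset.range L)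
        (f := fun j => ((c j * r j : ℕ):ℝ) * Real.sqrt (2 * (Real.sqrt (m j) * a j / κ j)))
      rw [Finset.card_range] at hCS
      have hfsq : ∀ j ∈ Finset.range L, (((c j * r j : ℕ):ℝ)
            * Real.sqrt (2 * (Real.sqrt (m j) * a j / κ j))) ^ 2
          = ((c j * r j:ℕ):ℝ)^2 * (2 * (Real.sqrt (m j) * a j / κ j)) := by
        intro j hj
        have hjL := Finset.mem_range.1 hj
        rw [mul_pow, Real.sq_sqrt]
        exact mul_nonneg (by norm_num)
          (div_nonneg (mul_nonneg (Real.sqrt_nonneg _) (ha j hjL).le) (hκpos j hjL).le)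
      rw [Finset.sum_congr rfl hfsq] at hCS
      have harith : (L:ℝ) * ∑ j ∈ Finset.range L,
            ((c j * r j:ℕ):ℝ)^2 * (2 * (Real.sqrt (m j) * a j / κ j))
          = frobNorm X * ((2 * Pi) * (∑ j ∈ Finset.range L,
              (c j:ℝ)^2 * (r j:ℝ)^2 * a j * Real.sqrt ((d (j+1):ℝ)/(c j:ℝ)) / s j)
              * (L:ℝ)^2) / ε := by
        have hR : frobNorm X * ((2 * Pi) * (∑ j ∈ Finset.range L,
              (c j:ℝ)^2 * (r j:ℝ)^2 * a j * Real.sqrt ((d (j+1):ℝ)/(c j:ℝ)) / s j)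
              * (L:ℝ)^2) / ε
            = ∑ j ∈ Finset.range L, frobNorm X * ((2 * Pi)
              * ((c j:ℝ)^2 * (r j:ℝ)^2 * a j * Real.sqrt ((d (j+1):ℝ)/(c j:ℝ)) / s j)
              * (L:ℝ)^2) / ε := by
          rw [Finset.mul_sum, Finset.sum_mul, Finset.mul_sum, Finset.sum_div]
        rw [hR, Finset.mul_sum]
        refine Finset.sum_congr rfl fun j hj => ?_
        have hjL := Finset.mem_range.1 hj
        have hLne : (L:ℝ) ≠ 0 := by
          have : 0 < L := Nat.pos_of_ne_zero (by omega)
          exact_mod_cast this.ne'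
        rcases Nat.eq_zero_or_pos (c j) with hc0 | hcpos
        · simp [hc0]
        · have hdm : ((d (j+1) : ℕ):ℝ) / (c j:ℝ) = (m j : ℝ) := by
            rw [hd j hjL]
            push_cast
            exact mul_div_cancel_left₀ _ (by exact_mod_cast hcpos.ne')
          rw [hdm]
          simp only [hκdef]
          push_cast
          field_simp
      rw [harith] at hCS
      refine le_trans hlogU (le_trans hsum1 ?_)
      rw [hsum2]
      have hsumnn : 0 ≤ ∑ j ∈ Finset.range L, ((c j * r j : ℕ):ℝ)
          * Real.sqrt (2 * (Real.sqrt (m j) * a j / κ j)) := Finset.sum_nonneg hfnn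
      rw [show ∑ j ∈ Finset.range L, ((c j * r j : ℕ):ℝ)
          * Real.sqrt (2 * (Real.sqrt (m j) * a j / κ j))
          = Real.sqrt ((∑ j ∈ Finset.range L, ((c j * r j : ℕ):ℝ)
            * Real.sqrt (2 * (Real.sqrt (m j) * a j / κ j)))^2)
          from (Real.sqrt_sq hsumnn).symm]
      exact Real.sqrt_le_sqrt hCS
    · -- covering property
      intro C hC
      have hCspec : ∀ i, i < L → specNorm (C i) ≤ s i := fun i hi => (hC i hi).1
      choose Wc hWa hWeq using fun (i : Fin L) => (hC i i.isLt).2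
      have hWadm : ∀ i : Fin L, specNorm (CiOf i i.isLt (Wc i)) ≤ s i := by
        intro i
        rw [hCiOf]
        simp only
        rw [← hWeq i]
        exact hCspec i i.isLt
      choose g hgG hgd using fun i : Fin L => hGcov i (Wc i) (hWa i) (hWadm i)
      refine ⟨netOutput d (CC g) σ X L,
        Finset.mem_image_of_mem _ (Fintype.mem_piFinset.2 hgG), ?_⟩
      have hCeq : ∀ (ℓ : ℕ) (hℓ : ℓ < L), C ℓ = CiOf ℓ hℓ (Wc ⟨ℓ, hℓ⟩) := by
        intro ℓ hℓ
        exact hWeq ⟨ℓ, hℓ⟩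
      have hCCl : ∀ (ℓ : ℕ) (hℓ : ℓ < L), CC g ℓ = CiOf ℓ hℓ (g ⟨ℓ, hℓ⟩) := by
        intro ℓ hℓ
        rw [hCC]
        simp only [dif_pos hℓ]
      have claim : ∀ ℓ, ℓ ≤ L →
          frobNorm (netOutput d C σ X ℓ - netOutput d (CC g) σ X ℓ)
            ≤ (ℓ:ℝ) * ε * (∏ j ∈ Finset.range ℓ, ρ j * s j) / ((L:ℝ) * Pi) := by
        intro ℓ
        induction ℓ with
        | zero =>
          intro _
          simp [netOutput, sub_self, CoverAux.frobNorm_zero]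
        | succ ℓ ih =>
          intro hℓ1
          have hℓL : ℓ < L := hℓ1
          have hih := ih hℓL.le
          have hL0 : (0:ℝ) < (L:ℝ) := by
            exact_mod_cast Nat.pos_of_ne_zero (by omega)
          have hρl := hρ ℓ hℓL
          have hsl := hs ℓ hℓL
          have hdef1 : netOutput d C σ X (ℓ+1)
              = σ ℓ (C ℓ * netOutput d C σ X ℓ) := rfl
          have hdef2 : netOutput d (CC g) σ X (ℓ+1)
              = σ ℓ (CC g ℓ * netOutput d (CC g) σ X ℓ) := rfl
          rw [hdef1, hdef2]
          have h1 := hσ ℓ hℓL (C ℓ * netOutput d C σ X ℓ)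
            (CC g ℓ * netOutput d (CC g) σ X ℓ)
          have hsplit : C ℓ * netOutput d C σ X ℓ - CC g ℓ * netOutput d (CC g) σ X ℓ
              = (C ℓ - CC g ℓ) * netOutput d C σ X ℓ
                + CC g ℓ * (netOutput d C σ X ℓ - netOutput d (CC g) σ X ℓ) := by
            rw [Matrix.sub_mul, Matrix.mul_sub]
            abel
          have htri := CoverAux.frobNorm_add_le
            ((C ℓ - CC g ℓ) * netOutput d C σ X ℓ)
            (CC g ℓ * (netOutput d C σ X ℓ - netOutput d (CC g) σ X ℓ))
          have hm1 := CoverAux.frobNorm_mul_le (C ℓ - CC g ℓ) (netOutput d C σ X ℓ)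
          have hm2 := CoverAux.frobNorm_mul_le (CC g ℓ)
            (netOutput d C σ X ℓ - netOutput d (CC g) σ X ℓ)
          have hspecd : specNorm (C ℓ - CC g ℓ) ≤ κ ℓ := by
            rw [hCeq ℓ hℓL, hCCl ℓ hℓL]
            exact hgd ⟨ℓ, hℓL⟩
          have hspecC' : specNorm (CC g ℓ) ≤ s ℓ := by
            rw [hCCl ℓ hℓL]
            exact hGspec ⟨ℓ, hℓL⟩ (g ⟨ℓ, hℓL⟩) (hgG ⟨ℓ, hℓL⟩)
          have hB := hgrow C hCspec ℓ hℓL.le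
          have hop1 : frobNorm ((C ℓ - CC g ℓ) * netOutput d C σ X ℓ)
              ≤ κ ℓ * ((∏ j ∈ Finset.range ℓ, ρ j * s j) * frobNorm X) := by
            refine le_trans hm1 ?_
            exact mul_le_mul hspecd hB (CoverAux.frobNorm_nonneg _) (hκpos ℓ hℓL).le
          have hop2 : frobNorm (CC g ℓ
                * (netOutput d C σ X ℓ - netOutput d (CC g) σ X ℓ))
              ≤ s ℓ * ((ℓ:ℝ) * ε * (∏ j ∈ Finset.range ℓ, ρ j * s j) / ((L:ℝ) * Pi)) := by
            refine le_trans hm2 ?_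
            exact mul_le_mul hspecC' hih (CoverAux.frobNorm_nonneg _) hsl.le
          have hκl : κ ℓ * ((∏ j ∈ Finset.range ℓ, ρ j * s j) * frobNorm X)
              = ε * s ℓ * (∏ j ∈ Finset.range ℓ, ρ j * s j) / ((L:ℝ) * Pi) := by
            simp only [hκdef]
            field_simp
          calc frobNorm (σ ℓ (C ℓ * netOutput d C σ X ℓ)
                - σ ℓ (CC g ℓ * netOutput d (CC g) σ X ℓ))
              ≤ ρ ℓ * frobNorm (C ℓ * netOutput d C σ X ℓ
                  - CC g ℓ * netOutput d (CC g) σ X ℓ) := h1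
            _ ≤ ρ ℓ * (κ ℓ * ((∏ j ∈ Finset.range ℓ, ρ j * s j) * frobNorm X)
                  + s ℓ * ((ℓ:ℝ) * ε * (∏ j ∈ Finset.range ℓ, ρ j * s j)
                    / ((L:ℝ) * Pi))) := by
                refine mul_le_mul_of_nonneg_left ?_ hρl
                rw [hsplit]
                exact le_trans htri (add_le_add hop1 hop2)
            _ = ((ℓ+1:ℕ):ℝ) * ε * (∏ j ∈ Finset.range (ℓ+1), ρ j * s j)
                  / ((L:ℝ) * Pi) := by
                rw [hκl, Finset.prod_range_succ]
                push_cast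
                field_simp
                ring
      have hfin := claim L (le_refl L)
      rcases Nat.eq_zero_or_pos L with hL0 | hLpos
      · refine le_trans ?_ hε.le
        subst hL0
        simpa using hfin
      · rw [← hPidef] at hfin
        have heq : (L:ℝ) * ε * Pi / ((L:ℝ) * Pi) = ε := by
          have hLne : (L:ℝ) ≠ 0 := by exact_mod_cast hLpos.ne'
          field_simp
        rw [heq] at hfin
        exact hfin
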